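/- If S is a blocking coalition with respect to a partition π of an HGCRP instance (i.e., U(S) > u_i(π) for every i ∈ S), then the non-increasingly sorted utility sequence of the partition π_S induced by the deviation of S is lexicographically greater than that of π. -/

import Mathlib

/-- A partition of the agents of type `α`, given as the map sending each agent to her
coalition: every agent belongs to her own coalition, and the coalitions are consistent. -/
def IsPartitionFn {α : Type*} [DecidableEq α] (C : α → Finset α) : Prop :=
  (∀ i, i ∈ C i) ∧ ∀ i j, i ∈ C j → C i = C j

/-- The social welfare of a partition: the sum of the agents' utilities. -/
noncomputable def welfare {α : Type*} [Fintype α] (U : Finset α → ℝ) (C : α → Finset α) : ℝ :=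
  ∑ i, U (C i)

/-- `C'` Pareto dominates `C`. -/
def ParetoDominates {α : Type*} (U : Finset α → ℝ) (C C' : α → Finset α) : Prop :=
  (∀ i, U (C i) ≤ U (C' i)) ∧ ∃ i, U (C i) < U (C' i)

/-- No partition Pareto dominates `C`. -/
def ParetoOptimal {α : Type*} [DecidableEq α] (U : Finset α → ℝ) (C : α → Finset α) : Prop :=
  ¬ ∃ C', IsPartitionFn C' ∧ ParetoDominates U C C'

/-- No nonempty coalition blocks `C`. -/
def CoreStable {α : Type*} (U : Finset α → ℝ) (C : α → Finset α) : Prop :=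
  ¬ ∃ S : Finset α, S.Nonempty ∧ ∀ i ∈ S, U (C i) < U S

/-- No agent can beneficially move to an existing (possibly empty) coalition without
making the members of that coalition worse off. -/
def IndividuallyStable {α : Type*} [DecidableEq α] (U : Finset α → ℝ) (C : α → Finset α) : Prop :=
  ¬ ∃ i T, i ∉ T ∧ (T = ∅ ∨ ((∃ j, C j = T) ∧ U T ≤ U (insert i T))) ∧
    U (C i) < U (insert i T)

/-- No agent can beneficially move to an existing (possibly empty) coalition. -/
def NashStable {α : Type*} [DecidableEq α] (U : Finset α → ℝ) (C : α → Finset α) : Prop :=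
  ¬ ∃ i T, i ∉ T ∧ (T = ∅ ∨ ∃ j, C j = T) ∧ U (C i) < U (insert i T)

/-- The sequence of the agents' utilities in partition `C`, sorted in non-increasing order. -/
noncomputable def psi {α : Type*} [Fintype α] (U : Finset α → ℝ) (C : α → Finset α) : List ℝ :=
  (Finset.univ.val.map fun i => U (C i)).sort (· ≥ ·)

lemma lex_of_strict (l l' : List ℝ) (k : ℕ) (hk : k < l.length) (hk' : k < l'.length)
    (hle : ∀ i (h : i < l.length) (h' : i < l'.length), i < k → l.get ⟨i, h⟩ ≤ l'.get ⟨i, h'⟩)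
    (hlt : l.get ⟨k, hk⟩ < l'.get ⟨k, hk'⟩) : List.Lex (· < ·) l l' := by
  induction l generalizing l' k with
  | nil => simp at hk
  | cons a t ih =>
    cases l' with
    | nil => simp at hk'
    | cons b t' =>
      cases k with
      | zero => exact List.Lex.rel hlt
      | succ k =>
        have hab : a ≤ b := hle 0 (by simp) (by simp) (Nat.succ_pos _)
        rcases lt_or_eq_of_le hab with h | h
        · exact List.Lex.rel h
        · subst h
          exact List.Lex.cons (ih t' k (Nat.lt_of_succ_lt_succ hk) (Nat.lt_of_succ_lt_succ hk')
            (fun i hi hi' hik => hle (i+1) (Nat.succ_lt_succ hi) (Nat.succ_lt_succ hi')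
              (Nat.succ_lt_succ hik)) hlt)

lemma sorted_get_iff (v : ℝ) (l : List ℝ) (hs : l.Pairwise (· ≥ ·)) (i : ℕ) (hi : i < l.length) :
    v ≤ l.get ⟨i, hi⟩ ↔ i < l.countP (fun y => decide (v ≤ y)) := by
  induction l generalizing i with
  | nil => simp at hi
  | cons a t ih =>
    have ha : ∀ b ∈ t, b ≤ a := fun b hb => List.rel_of_pairwise_cons hs hb
    have hts : t.Pairwise (· ≥ ·) := hs.of_cons
    rw [List.countP_cons]
    cases i with
    | zero =>
      simp only [List.get]
      constructor
      · intro h; simp [h]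
      · intro h
        by_contra hva
        rw [if_neg (by simpa using hva), add_zero] at h
        obtain ⟨b, hb, hvb⟩ := List.countP_pos_iff.mp h
        exact hva (le_trans (by simpa using hvb) (ha b hb))
    | succ i =>
      have hi' : i < t.length := Nat.lt_of_succ_lt_succ hi
      constructor
      · intro h
        have hva : v ≤ a := le_trans h (ha _ (t.get_mem _))
        rw [if_pos (by simpa using hva)]
        exact Nat.succ_lt_succ ((ih hts i hi').mp h)
      · intro h
        refine (ih hts i hi').mpr ?_
        have : i + 1 < t.countP (fun y => decide (v ≤ y)) + 1 := by
          refine lt_of_lt_of_le h ?_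
          split <;> omega
        omega

lemma psi_countP {α : Type*} [Fintype α] [DecidableEq α] (U : Finset α → ℝ) (D : α → Finset α)
    (w : ℝ) : (psi U D).countP (fun y => decide (w ≤ y))
      = (Finset.univ.filter (fun i => w ≤ U (D i))).card := by
  have h1 : (psi U D).countP (fun y => decide (w ≤ y))
      = Multiset.countP (fun y => w ≤ y) (Finset.univ.val.map fun i => U (D i)) := by
    rw [← Multiset.coe_countP, psi, Multiset.sort_eq]
  rw [h1, Multiset.countP_map]
  rfl

lemma psi_length {α : Type*} [Fintype α] (U : Finset α → ℝ) (D : α → Finset α) :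
    (psi U D).length = Fintype.card α := by
  simp [psi, Multiset.length_sort]

/-- If `S` is a blocking coalition with respect to partition `C`, then the sorted utility
sequence of the induced partition `π_S` is lexicographically greater than that of `C`. -/
theorem stmt1 {α : Type*} [Fintype α] [DecidableEq α]
    (U : Finset α → ℝ) (hU : ∀ T : Finset α, 0 ≤ U T)
    (C : α → Finset α) (hC : IsPartitionFn C)
    (S : Finset α) (hSne : S.Nonempty) (hblock : ∀ i ∈ S, U (C i) < U S) :
    List.Lex (· < ·) (psi U C) (psi U (fun i => if i ∈ S then S else C i \ S)) := by
  classical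
  set C' : α → Finset α := fun i => if i ∈ S then S else C i \ S with hC'def
  set v := U S with hv
  -- utilities unchanged for agents with old utility ≥ v
  have P1 : ∀ j, v ≤ U (C j) → U (C' j) = U (C j) := by
    intro j hj
    have hjS : j ∉ S := fun h => absurd hj (not_le.mpr (hblock j h))
    have hdisj : Disjoint (C j) S := by
      rw [Finset.disjoint_left]
      intro s hs hsS
      have he : C s = C j := hC.2 s j hs
      exact absurd hj (not_le.mpr (he ▸ hblock s hsS))
    simp only [hC'def, if_neg hjS]
    rw [Finset.sdiff_eq_self_of_disjoint hdisj]
  have filt : ∀ x : ℝ, v ≤ x →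
      (Finset.univ.filter (fun i => x ≤ U (C i))) ⊆ (Finset.univ.filter (fun i => x ≤ U (C' i))) := by
    intro x hx i hi
    simp only [Finset.mem_filter, Finset.mem_univ, true_and] at hi ⊢
    rw [P1 i (le_trans hx hi)]; exact hi
  set L := psi U C with hL
  set L' := psi U C' with hL'
  have sL : L.Pairwise (· ≥ ·) := Multiset.pairwise_sort _ _
  have sL' : L'.Pairwise (· ≥ ·) := Multiset.pairwise_sort _ _
  set a := (Finset.univ.filter (fun i => v ≤ U (C i))).card with ha
  set a' := (Finset.univ.filter (fun i => v ≤ U (C' i))).card with ha'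
  have haa' : a < a' := by
    obtain ⟨i0, hi0⟩ := hSne
    refine Finset.card_lt_card ⟨filt v le_rfl, fun hsub => ?_⟩
    have h1 : i0 ∈ Finset.univ.filter (fun i => v ≤ U (C' i)) := by
      simp only [Finset.mem_filter, Finset.mem_univ, true_and, hC'def, if_pos hi0]
      exact le_of_eq hv
    have h2 := hsub h1
    simp only [Finset.mem_filter, Finset.mem_univ, true_and] at h2
    exact absurd h2 (not_le.mpr (hblock i0 hi0))
  have ha'n : a' ≤ Fintype.card α := by
    simpa using Finset.card_filter_le Finset.univ (fun i => v ≤ U (C' i))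
  have hLlen : L.length = Fintype.card α := psi_length U C
  have hL'len : L'.length = Fintype.card α := psi_length U C'
  have hk : a < L.length := by omega
  have hk' : a < L'.length := by omega
  refine lex_of_strict L L' a hk hk' ?_ ?_
  · -- pointwise ≤ before index a
    intro i hi hi' hik
    have hvx : v ≤ L.get ⟨i, hi⟩ := by
      rw [sorted_get_iff v L sL i hi, psi_countP]
      omega
    set x := L.get ⟨i, hi⟩ with hx
    have h1 : i < L.countP (fun y => decide (x ≤ y)) :=
      (sorted_get_iff x L sL i hi).mp le_rfl
    have h2 : i < L'.countP (fun y => decide (x ≤ y)) := by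
      rw [psi_countP] at h1 ⊢
      exact lt_of_lt_of_le h1 (Finset.card_le_card (filt x hvx))
    exact le_trans le_rfl ((sorted_get_iff x L' sL' i hi').mpr h2)
  · -- strict at index a
    have h1 : ¬ v ≤ L.get ⟨a, hk⟩ := by
      rw [sorted_get_iff v L sL a hk, psi_countP]
      omega
    have h2 : v ≤ L'.get ⟨a, hk'⟩ := by
      rw [sorted_get_iff v L' sL' a hk', psi_countP]
      omega
    linarith [not_le.mp h1]
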